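/- Assume N ≥ 5. Then the smallest eigenvalue λ_N of the real symmetric matrix A satisfies λ_N ≤ 3 · δρ* / 10. -/

import Mathlib

open Matrix Finset

lemma rayleigh_min_aux {n : Type*} [Fintype n] [DecidableEq n] {A : Matrix n n ℝ}
    (hA : A.IsHermitian) {c : ℝ} (hc : ∀ i, c ≤ hA.eigenvalues i) (x : n → ℝ) :
    c * (x ⬝ᵥ x) ≤ x ⬝ᵥ A *ᵥ x := by
  set U : Matrix n n ℝ := (hA.eigenvectorUnitary : Matrix n n ℝ) with hUdef
  have hU : U * star U = 1 := Matrix.mem_unitaryGroup_iff.mp hA.eigenvectorUnitary.2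
  have key : A - c • 1 = U * diagonal (fun i => hA.eigenvalues i - c) * star U := by
    conv_lhs => rw [hA.spectral_theorem, Unitary.conjStarAlgAut_apply]
    have hd : diagonal (fun i => hA.eigenvalues i - c)
        = diagonal (RCLike.ofReal ∘ hA.eigenvalues) - c • (1 : Matrix n n ℝ) := by
      rw [Matrix.smul_one_eq_diagonal, ← diagonal_sub]
      rfl
    rw [hd, Matrix.mul_sub, Matrix.sub_mul, mul_assoc]
    congr 1
    rw [Matrix.mul_smul, Matrix.smul_mul, mul_one, hU]
  have hpsd : (A - c • 1).PosSemidef := by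
    rw [key, Matrix.star_eq_conjTranspose U]
    exact (posSemidef_diagonal_iff.mpr fun i => sub_nonneg.mpr (hc i)).mul_mul_conjTranspose_same U
  have h2 := hpsd.dotProduct_mulVec_nonneg x
  have hsx : star x = x := by ext i; simp
  rw [hsx, sub_mulVec, dotProduct_sub, smul_mulVec, one_mulVec, dotProduct_smul] at h2
  simp only [smul_eq_mul] at h2
  linarith

noncomputable def testv : ℕ → ℝ := fun k =>
  if k = 0 then -1 else if k = 1 then 2 else if k = 2 then -2 else
  if k = 3 then 2 else if k = 4 then -1 else 0

lemma testv_zero {k : ℕ} (hk : 5 ≤ k) : testv k = 0 := by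
  unfold testv
  have h0 : k ≠ 0 := by omega
  have h1 : k ≠ 1 := by omega
  have h2 : k ≠ 2 := by omega
  have h3 : k ≠ 3 := by omega
  have h4 : k ≠ 4 := by omega
  simp [h0, h1, h2, h3, h4]

/-- For `N ≥ 5`, the smallest eigenvalue of the layer-coupling matrix `A` is at
most `3 δρ* / 10`, where `δρ*` is the maximal adjacent density gap. -/
theorem layer_coupling_min_eigenvalue_upper_bound
    (N : ℕ) (hN : 5 ≤ N) (ρ : ℕ → ℝ)
    (hρ : ∀ i j, i < j → j < N → ρ i < ρ j) (hρ0 : 0 < ρ 0)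
    (A : Matrix (Fin N) (Fin N) ℝ)
    (hA : ∀ i j : Fin N, A i j = ρ (min i.val j.val))
    (hHerm : A.IsHermitian)
    (δ : ℝ)
    (hδ : δ = Finset.sup' (Finset.range (N - 1))
        ⟨0, Finset.mem_range.mpr (by omega)⟩ (fun i => ρ (i + 1) - ρ i)) :
    Finset.univ.inf' ⟨⟨0, by omega⟩, Finset.mem_univ _⟩ hHerm.eigenvalues ≤
      3 * δ / 10 := by
  set c := Finset.univ.inf' ⟨⟨0, by omega⟩, Finset.mem_univ _⟩ hHerm.eigenvalues with hcdef
  have hc : ∀ i, c ≤ hHerm.eigenvalues i := fun i => Finset.inf'_le _ (Finset.mem_univ i)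
  set x : Fin N → ℝ := fun i => testv i.val with hxdef
  have hray := rayleigh_min_aux hHerm hc x
  -- compute x ⬝ᵥ x = 14
  have hxx : x ⬝ᵥ x = 14 := by
    rw [dotProduct]
    rw [Fin.sum_univ_eq_sum_range (fun k => testv k * testv k) N]
    rw [← Finset.sum_subset (Finset.range_subset_range.mpr (by omega : 5 ≤ N))
      (fun k _ hk => by
        have : 5 ≤ k := by simpa using Finset.mem_range.not.mp hk
        simp [testv_zero this])]
    simp [Finset.sum_range_succ, testv]
    norm_num
  -- compute the quadratic form
  have hQ : x ⬝ᵥ A *ᵥ x = ρ 4 - ρ 0 := by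
    simp only [dotProduct, mulVec, hxdef]
    have hstep : ∀ i : Fin N,
        (fun j : Fin N => A i j) ⬝ᵥ (fun j : Fin N => testv j.val)
          = ∑ m ∈ Finset.range 5, ρ (min i.val m) * testv m := by
      intro i
      rw [dotProduct]
      simp only [hA]
      rw [Fin.sum_univ_eq_sum_range (fun m => ρ (min i.val m) * testv m) N]
      exact (Finset.sum_subset (Finset.range_subset_range.mpr (by omega : 5 ≤ N))
        (fun k _ hk => by
          have : 5 ≤ k := by simpa using Finset.mem_range.not.mp hk
          simp [testv_zero this])).symm
    calc (∑ i : Fin N, testv i.val * ((fun j : Fin N => A i j) ⬝ᵥ (fun j : Fin N => testv j.val)))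
        = ∑ i : Fin N, testv i.val * ∑ m ∈ Finset.range 5, ρ (min i.val m) * testv m := by
          exact Finset.sum_congr rfl fun i _ => by rw [hstep]
      _ = ∑ i ∈ Finset.range N, testv i * ∑ m ∈ Finset.range 5, ρ (min i m) * testv m := by
          exact Fin.sum_univ_eq_sum_range
            (fun k => testv k * ∑ m ∈ Finset.range 5, ρ (min k m) * testv m) N
      _ = ∑ i ∈ Finset.range 5, testv i * ∑ m ∈ Finset.range 5, ρ (min i m) * testv m := by
          exact (Finset.sum_subset (Finset.range_subset_range.mpr (by omega : 5 ≤ N))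
            (fun k _ hk => by
              have : 5 ≤ k := by simpa using Finset.mem_range.not.mp hk
              simp [testv_zero this])).symm
      _ = ρ 4 - ρ 0 := by
          simp [Finset.sum_range_succ, testv]
          norm_num
          ring
  -- gaps bounded by δ
  have hgap : ∀ j : ℕ, j < 4 → ρ (j + 1) - ρ j ≤ δ := by
    intro j hj
    rw [hδ]
    have hmem : j ∈ Finset.range (N - 1) := Finset.mem_range.mpr (by omega)
    exact Finset.le_sup' (fun i => ρ (i + 1) - ρ i) hmem
  have hδpos : 0 ≤ δ := by
    have h01 : ρ 0 < ρ 1 := hρ 0 1 (by omega) (by omega)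
    have := hgap 0 (by omega)
    linarith
  have hQle : x ⬝ᵥ A *ᵥ x ≤ 4 * δ := by
    have g0 := hgap 0 (by omega)
    have g1 := hgap 1 (by omega)
    have g2 := hgap 2 (by omega)
    have g3 := hgap 3 (by omega)
    rw [hQ]; linarith
  rw [hxx] at hray
  linarith
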